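/- In the scalar case, the map p ↦ Γ_bs(p, λ) = a² p + q − λ a² p²/(p + r) is concave on p ≥ 0; consequently, by Jensen's inequality, E[Γ_bs(P, λ)] ≤ Γ_bs(E[P], λ) for any nonnegative integrable random variable P. -/

import Mathlib

open MeasureTheory Set

lemma aux_convex_inv_shift (r : ℝ) (hr : 0 < r) :
    ConvexOn ℝ (Set.Ici 0) (fun p : ℝ => (p + r)⁻¹) := by
  have h1 : ConvexOn ℝ (Set.Ioi (0:ℝ)) (fun x : ℝ => x⁻¹) := by
    simpa using convexOn_zpow (𝕜 := ℝ) (-1)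
  have h2 := h1.translate_left r
  have h3 : Set.Ici (0:ℝ) ⊆ (fun z : ℝ => r + z) ⁻¹' Set.Ioi 0 := by
    intro x hx
    simp only [Set.mem_preimage, Set.mem_Ioi]
    have : (0:ℝ) ≤ x := hx
    linarith
  have := h2.subset h3 (convex_Ici 0)
  refine this.congr fun x _ => ?_
  simp [add_comm]

lemma aux_concave (a q r lam : ℝ) (hr : 0 < r) (hlam : lam ∈ Set.Icc (0:ℝ) 1) :
    ConcaveOn ℝ (Set.Ici 0) (fun p => a ^ 2 * p + q - lam * a ^ 2 * p ^ 2 / (p + r)) := by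
  have hc : (0:ℝ) ≤ lam * a ^ 2 * r ^ 2 :=
    mul_nonneg (mul_nonneg hlam.1 (sq_nonneg a)) (sq_nonneg r)
  have hconv : ConvexOn ℝ (Set.Ici 0)
      (fun p : ℝ => lam * a ^ 2 * r ^ 2 * (p + r)⁻¹) :=
    (aux_convex_inv_shift r hr).smul hc
  have haff : ConcaveOn ℝ (Set.Ici 0)
      (fun p : ℝ => (1 - lam) * a ^ 2 * p + (q + lam * a ^ 2 * r)) := by
    have h0 : (0:ℝ) ≤ (1 - lam) * a ^ 2 :=
      mul_nonneg (by linarith [hlam.2]) (sq_nonneg a)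
    have := ((concaveOn_id (convex_Ici (0:ℝ))).smul h0).add_const (q + lam * a ^ 2 * r)
    simpa [smul_eq_mul, Pi.add_def] using this
  have := haff.sub hconv
  refine this.congr fun x hx => ?_
  have hx0 : (0:ℝ) ≤ x := hx
  have hxr : x + r ≠ 0 := by positivity
  simp only [Pi.sub_apply]
  field_simp
  ring

theorem stmt19 (a q r lam : ℝ) (hq : 0 < q) (hr : 0 < r)
    (hlam : lam ∈ Set.Icc (0 : ℝ) 1) :
    ConcaveOn ℝ (Set.Ici 0) (fun p => a ^ 2 * p + q - lam * a ^ 2 * p ^ 2 / (p + r)) ∧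
    ∀ {Ω : Type} [MeasurableSpace Ω] (μ : Measure Ω) [IsProbabilityMeasure μ]
      (P : Ω → ℝ), (∀ ω, 0 ≤ P ω) → Integrable P μ →
      Integrable (fun ω => a ^ 2 * P ω + q - lam * a ^ 2 * (P ω) ^ 2 / (P ω + r)) μ →
      ∫ ω, (a ^ 2 * P ω + q - lam * a ^ 2 * (P ω) ^ 2 / (P ω + r)) ∂μ
        ≤ a ^ 2 * (∫ ω, P ω ∂μ) + q
            - lam * a ^ 2 * (∫ ω, P ω ∂μ) ^ 2 / ((∫ ω, P ω ∂μ) + r) := by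
  have hcon := aux_concave a q r lam hr hlam
  refine ⟨hcon, ?_⟩
  intro Ω _ μ _ P hP hPint hGint
  have hcont : ContinuousOn (fun p : ℝ => a ^ 2 * p + q - lam * a ^ 2 * p ^ 2 / (p + r))
      (Set.Ici 0) := by
    apply ContinuousOn.sub (by fun_prop)
    apply ContinuousOn.div (by fun_prop) (by fun_prop)
    intro x hx
    have hx0 : (0:ℝ) ≤ x := hx
    positivity
  have := hcon.le_map_integral hcont isClosed_Ici
    (Filter.Eventually.of_forall fun ω => hP ω) hPint hGint
  exact this
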